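/- arXiv:2510.00343 — 4 statements merged into one kernel-verified Lean document; each statement's English description precedes it below -/
import Mathlib

section
/- Let n ≥ 1, m ≥ 1, and let X_1,…,X_n be i.i.d. random variables uniform on {1,…,2m}. Then the number of inversions I_{n,m} of the random permutation produced by an m-shelf shuffle of n cards satisfies the distributional identity I_{n,m} =_d Σ_{1≤i<k≤n} [ 1{X_i > X_k} + 1{X_i = X_k and X_i is even} ]. -/
open MeasureTheory ProbabilityTheory Finset Filter

/-- The uniform probability measure on a finite type. -/
noncomputable def uniformM (α : Type*) [Fintype α] [MeasurableSpace α] : Measure α :=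
  ((Fintype.card α : ENNReal))⁻¹ • Measure.count

/-- The pile label (in `{1, …, 2m}`) of card `i` under the pile assignment `w`
(pile indices in `Fin (2*m)` are 0-based, so pile `k` carries label `k + 1`).
Under the uniform measure on words, `fun w => Xval w i` are i.i.d. uniform on `{1, …, 2m}`. -/
def Xval {m n : ℕ} (w : Fin n → Fin (2*m)) (i : Fin n) : ℕ := (w i : ℕ) + 1

/-- Sorting key of card `i` in an `m`-shelf shuffle with pile assignment `w`:
cards are ordered first by pile label; within an odd-labeled pile they keep their
increasing order, and within an even-labeled pile their order is reversed. -/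
noncomputable def shelfKey {m n : ℕ} (w : Fin n → Fin (2*m)) (i : Fin n) :
    Lex (Fin (2*m) × ℤ) :=
  toLex (w i, if Even (Xval w i) then -(i : ℤ) else (i : ℤ))

/-- The permutation of `{1, …, n}` (0-based: of `Fin n`) produced by an `m`-shelf shuffle
with pile assignment `w`: position `p` of the shuffled deck holds card `shelfPerm w p`. -/
noncomputable def shelfPerm {m n : ℕ} (w : Fin n → Fin (2*m)) : Equiv.Perm (Fin n) :=
  Tuple.sort (shelfKey w)

/-- The number of inversions of a permutation: pairs `i < j` with `π i > π j`. -/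
def invCount {n : ℕ} (π : Equiv.Perm (Fin n)) : ℕ :=
  ((Finset.univ : Finset (Fin n × Fin n)).filter
    (fun p => p.1 < p.2 ∧ π p.2 < π p.1)).card

/-- `I_{n,m}`: the number of inversions after an `m`-shelf shuffle of `n` cards,
as a random variable on the space of pile-assignment words. -/
noncomputable def shelfInv (m n : ℕ) (w : Fin n → Fin (2*m)) : ℕ := invCount (shelfPerm w)

/-- Auxiliary: the inversion count of the sorting permutation of `f` equals the number of
pairs `i < k` with `f k < f i`. -/
lemma invCount_sort {n : ℕ} {α : Type*} [LinearOrder α] (f : Fin n → α) :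
    invCount (Tuple.sort f) =
      ((Finset.univ : Finset (Fin n × Fin n)).filter
        (fun p => p.1 < p.2 ∧ f p.2 < f p.1)).card := by
  obtain ⟨hmono, hstab⟩ := (Tuple.eq_sort_iff (σ := Tuple.sort f) (f := f)).1 rfl
  set σ := Tuple.sort f
  apply Finset.card_bij (fun p _ => (σ p.2, σ p.1))
  · rintro ⟨p, q⟩ hp
    simp only [mem_filter, mem_univ, true_and] at hp ⊢
    obtain ⟨hpq, hσ⟩ := hp
    refine ⟨hσ, ?_⟩
    rcases lt_or_eq_of_le (hmono hpq.le) with h | h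
    · exact h
    · exact absurd (hstab p q hpq h) hσ.asymm
  · rintro ⟨p, q⟩ hp ⟨p', q'⟩ hq h
    simp only [Prod.mk.injEq] at h
    have h1 : q = q' := σ.injective h.1
    have h2 : p = p' := σ.injective h.2
    simp [h1, h2]
  · rintro ⟨i, k⟩ hik
    simp only [mem_filter, mem_univ, true_and] at hik
    obtain ⟨hik1, hf⟩ := hik
    refine ⟨(σ⁻¹ k, σ⁻¹ i), ?_, by simp⟩
    simp only [mem_filter, mem_univ, true_and, Equiv.Perm.coe_inv, Equiv.apply_symm_apply]
    refine ⟨?_, hik1⟩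
    by_contra h
    push_neg at h
    have := hmono h
    simp only [Function.comp_apply, Equiv.Perm.coe_inv, Equiv.apply_symm_apply] at this
    exact absurd this hf.not_ge

/-- Auxiliary: comparison of shelf keys for `i < k`. -/
lemma shelfKey_lt_iff {m n : ℕ} (w : Fin n → Fin (2*m)) {i k : Fin n} (hik : i < k) :
    shelfKey w k < shelfKey w i ↔
      (Xval w k < Xval w i ∨ (Xval w i = Xval w k ∧ Even (Xval w i))) := by
  have hX : Xval w k < Xval w i ↔ w k < w i := by
    unfold Xval; rw [Fin.lt_def]; omega
  have hXeq : Xval w i = Xval w k ↔ w i = w k := by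
    unfold Xval; rw [Fin.ext_iff]; omega
  rw [shelfKey, shelfKey, Prod.Lex.lt_iff]
  constructor
  · rintro (h | ⟨hw, hs⟩)
    · exact Or.inl (hX.2 h)
    · have hxx : Xval w i = Xval w k := hXeq.2 hw.symm
      refine Or.inr ⟨hxx, ?_⟩
      by_cases he : Even (Xval w i)
      · exact he
      · exfalso
        rw [hxx] at he
        rw [if_neg he, if_neg (hxx ▸ he)] at hs
        simp only [ofLex_toLex] at hs
        have : (i : ℤ) < (k : ℤ) := by exact_mod_cast hik
        omega
  · rintro (h | ⟨hw, he⟩)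
    · exact Or.inl (hX.1 h)
    · refine Or.inr ⟨(hXeq.1 hw).symm, ?_⟩
      rw [if_pos he, if_pos (hw ▸ he)]
      simp only [ofLex_toLex]
      have : (i : ℤ) < (k : ℤ) := by exact_mod_cast hik
      omega

/-- Pointwise identity: the inversion count equals the pairwise sum of indicators. -/
lemma shelfInv_eq_sum {m n : ℕ} (w : Fin n → Fin (2*m)) :
    shelfInv m n w =
      ∑ p ∈ (Finset.univ : Finset (Fin n × Fin n)).filter (fun p => p.1 < p.2),
          ((if Xval w p.2 < Xval w p.1 then 1 else 0)
            + (if Xval w p.1 = Xval w p.2 ∧ Even (Xval w p.1) then 1 else 0)) := by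
  have hterm : ∀ p ∈ (Finset.univ : Finset (Fin n × Fin n)).filter (fun p => p.1 < p.2),
      ((if Xval w p.2 < Xval w p.1 then 1 else 0)
        + (if Xval w p.1 = Xval w p.2 ∧ Even (Xval w p.1) then 1 else 0))
      = (if (Xval w p.2 < Xval w p.1 ∨ (Xval w p.1 = Xval w p.2 ∧ Even (Xval w p.1)))
          then 1 else 0) := by
    intro p _
    by_cases hA : Xval w p.2 < Xval w p.1
    · have hB : ¬ (Xval w p.1 = Xval w p.2 ∧ Even (Xval w p.1)) := by
        rintro ⟨h, -⟩; omega
      simp [hA, hB]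
    · by_cases hB : Xval w p.1 = Xval w p.2 ∧ Even (Xval w p.1) <;> simp [hA, hB]
  rw [Finset.sum_congr rfl hterm, ← Finset.card_filter, Finset.filter_filter]
  rw [shelfInv, shelfPerm, invCount_sort]
  congr 1
  apply Finset.filter_congr
  intro p _
  constructor
  · rintro ⟨h1, h2⟩; exact ⟨h1, (shelfKey_lt_iff w h1).1 h2⟩
  · rintro ⟨h1, h2⟩; exact ⟨h1, (shelfKey_lt_iff w h1).2 h2⟩

/-- For `n ≥ 1`, `m ≥ 1`, with `X_1, …, X_n` i.i.d. uniform on `{1,…,2m}`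
(realized as the coordinates of a uniform random word `w`), the number of inversions
`I_{n,m}` of the permutation produced by an `m`-shelf shuffle of `n` cards is equal in
distribution to `Σ_{1 ≤ i < k ≤ n} (1{X_i > X_k} + 1{X_i = X_k and X_i even})`. -/
theorem shelf_inversions_distributional_identity (n m : ℕ) (hn : 1 ≤ n) (hm : 1 ≤ m) :
    Measure.map (fun w => shelfInv m n w) (uniformM (Fin n → Fin (2*m))) =
    Measure.map (fun w : Fin n → Fin (2*m) =>
        ∑ p ∈ (Finset.univ : Finset (Fin n × Fin n)).filter (fun p => p.1 < p.2),
          ((if Xval w p.2 < Xval w p.1 then 1 else 0)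
            + (if Xval w p.1 = Xval w p.2 ∧ Even (Xval w p.1) then 1 else 0)))
      (uniformM (Fin n → Fin (2*m))) := by
  congr 1
  funext w
  exact shelfInv_eq_sum w
end

section
/- Let n ≥ 1, m ≥ 1, and let X_1,…,X_n be i.i.d. uniform on {1,…,2m}. Then the statistic A_{n,m} = Σ_{1≤i<k≤n} 1{X_i > X_k} satisfies Var(A_{n,m}) = [n(n−1)(2n+5)/72] · [((2m)² − 1)/(2m)²]. -/
open MeasureTheory ProbabilityTheory Finset Filter

section meas
variable {α : Type*} [Fintype α] [MeasurableSpace α] [MeasurableSingletonClass α] [Nonempty α]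

omit [Nonempty α] in
lemma uniformM_singleton (x : α) : uniformM α {x} = ((Fintype.card α : ENNReal))⁻¹ := by
  simp [uniformM, Measure.count_singleton]

instance : IsProbabilityMeasure (uniformM α) := by
  constructor
  rw [uniformM]
  simp only [Measure.smul_apply, Measure.count_univ, ENat.card_eq_coe_fintype_card, smul_eq_mul]
  exact ENNReal.inv_mul_cancel (a := (Fintype.card α : ENNReal)) (by simp [Fintype.card_ne_zero]) (by simp)

lemma integrable_uniformM (f : α → ℝ) : Integrable f (uniformM α) := by
  obtain ⟨C, hC⟩ := Finite.exists_le (fun a => ‖f a‖)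
  exact (memLp_one_iff_integrable.mp
    (MemLp.of_bound (measurable_of_countable f).aestronglyMeasurable C (ae_of_all _ hC)))

lemma integral_uniformM (f : α → ℝ) : ∫ a, f a ∂(uniformM α) = (∑ a, f a) / Fintype.card α := by
  rw [integral_fintype (integrable_uniformM f)]
  simp [Measure.real, uniformM_singleton, ENNReal.toReal_inv, div_eq_mul_inv, Finset.sum_mul, mul_comm]

lemma variance_uniformM (f : α → ℝ) :
    variance f (uniformM α) =
      (∑ a, (f a)^2) / Fintype.card α - ((∑ a, f a) / Fintype.card α)^2 := by
  have hm : MemLp f 2 (uniformM α) := by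
    obtain ⟨C, hC⟩ := Finite.exists_le (fun a => ‖f a‖)
    exact MemLp.of_bound (measurable_of_countable f).aestronglyMeasurable C (ae_of_all _ hC)
  rw [variance_eq_sub hm]
  simp only [Pi.pow_apply]
  rw [integral_uniformM, integral_uniformM]
end meas

open scoped Classical in
noncomputable def splitEquiv {n : ℕ} {β : Type*} {ι : β → Fin n}
    (hι : Function.Injective ι) (α : Type*) :
    (Fin n → α) ≃ ((β → α) × ({x : Fin n // x ∉ Set.range ι} → α)) where
  toFun w := (fun t => w (ι t), fun x => w x.1)
  invFun p x := if h : x ∈ Set.range ι then p.1 h.choose else p.2 ⟨x, h⟩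
  left_inv w := by
    funext x
    dsimp only
    by_cases h : x ∈ Set.range ι
    · rw [dif_pos h]; exact congrArg w h.choose_spec
    · rw [dif_neg h]
  right_inv p := by
    refine Prod.ext ?_ ?_
    · funext t
      have h : ι t ∈ Set.range ι := ⟨t, rfl⟩
      show (if h' : _ then _ else _) = _
      rw [dif_pos h]
      exact congrArg p.1 (hι h.choose_spec)
    · funext x
      show (if h' : _ then _ else _) = _
      rw [dif_neg x.2]

lemma sum_marg {n N : ℕ} {β : Type*} [Fintype β] [DecidableEq β] {ι : β → Fin n}
    (hι : Function.Injective ι) (g : (β → Fin N) → ℝ) :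
    ∑ w : Fin n → Fin N, g (fun t => w (ι t)) =
      (N : ℝ)^(n - Fintype.card β) * ∑ v, g v := by
  classical
  have hcard : Fintype.card {x : Fin n // x ∉ Set.range ι} = n - Fintype.card β := by
    rw [Fintype.card_subtype_compl]
    simp only [Fintype.card_fin]
    congr 1
    rw [Set.card_range_of_injective hι]
  rw [← Equiv.sum_comp (splitEquiv hι (Fin N)).symm
    (fun w => g (fun t => w (ι t)))]
  have key : ∀ p : (β → Fin N) × ({x : Fin n // x ∉ Set.range ι} → Fin N),
      (fun t => (splitEquiv hι (Fin N)).symm p (ι t)) = p.1 := by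
    intro p
    conv_rhs => rw [← (splitEquiv hι (Fin N)).apply_symm_apply p]
    rfl
  simp only [key]
  rw [Fintype.sum_prod_type]
  simp only [Finset.sum_const, nsmul_eq_mul]
  rw [← Finset.mul_sum]
  have hc : #(univ : Finset ({x : Fin n // x ∉ Set.range ι} → Fin N))
      = N ^ (n - Fintype.card β) := by
    rw [Finset.card_univ, Fintype.card_fun, Fintype.card_fin, hcard]
  rw [hc]
  push_cast
  ring

lemma sum_pi_succ {k : ℕ} {α : Type*} [Fintype α] (g : (Fin (k+1) → α) → ℝ) :
    ∑ v : Fin (k+1) → α, g v = ∑ a : α, ∑ v : Fin k → α, g (Fin.cons a v) := by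
  rw [← Equiv.sum_comp (Fin.consEquiv (fun _ => α)) g, Fintype.sum_prod_type]
  rfl

lemma sum_pi_zero {α : Type*} [Fintype α] (g : (Fin 0 → α) → ℝ) (v : Fin 0 → α) :
    ∑ u : Fin 0 → α, g u = g v := by
  exact Fintype.sum_subsingleton g v

lemma sum_pi_two {α : Type*} [Fintype α] (g : (Fin 2 → α) → ℝ) :
    ∑ v : Fin 2 → α, g v = ∑ a : α, ∑ b : α, g ![a, b] := by
  rw [sum_pi_succ]
  refine Finset.sum_congr rfl fun a _ => ?_
  rw [sum_pi_succ]
  refine Finset.sum_congr rfl fun b _ => ?_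
  rw [sum_pi_zero _ ![]]
  congr 1

lemma sum_pi_three {α : Type*} [Fintype α] (g : (Fin 3 → α) → ℝ) :
    ∑ v : Fin 3 → α, g v = ∑ a : α, ∑ b : α, ∑ c : α, g ![a, b, c] := by
  rw [sum_pi_succ]
  refine Finset.sum_congr rfl fun a _ => ?_
  rw [sum_pi_two]
  rfl

lemma sum_pi_four {α : Type*} [Fintype α] (g : (Fin 4 → α) → ℝ) :
    ∑ v : Fin 4 → α, g v = ∑ a : α, ∑ b : α, ∑ c : α, ∑ d : α, g ![a, b, c, d] := by
  rw [sum_pi_succ]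
  refine Finset.sum_congr rfl fun a _ => ?_
  rw [sum_pi_three]
  rfl

lemma sum_if_lt {N : ℕ} (a : Fin N) :
    ∑ b : Fin N, (if b < a then (1:ℝ) else 0) = a := by
  have ha := a.isLt
  simp only [Fin.lt_def]
  rw [Fin.sum_univ_eq_sum_range (fun b => if b < (a:ℕ) then (1:ℝ) else 0)]
  rw [Finset.sum_boole]
  have h : filter (fun x => x < (a:ℕ)) (range N) = range a := by
    ext x; simp only [Finset.mem_filter, Finset.mem_range]; omega
  rw [h, Finset.card_range]

lemma sum_if_gt {N : ℕ} (a : Fin N) :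
    ∑ b : Fin N, (if a < b then (1:ℝ) else 0) = N - 1 - a := by
  have ha := a.isLt
  simp only [Fin.lt_def]
  rw [Fin.sum_univ_eq_sum_range (fun b => if (a:ℕ) < b then (1:ℝ) else 0)]
  rw [Finset.sum_boole]
  have h : filter (fun x => (a:ℕ) < x) (range N) = Finset.Ico ((a:ℕ)+1) N := by
    ext x; simp only [Finset.mem_filter, Finset.mem_range, Finset.mem_Ico]; omega
  rw [h, Nat.card_Ico, Nat.cast_sub (by omega)]
  push_cast
  ring

lemma sum_range_id' (t : ℕ) : ∑ x ∈ range t, (x:ℝ) = t*(t-1)/2 := by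
  induction t with
  | zero => simp
  | succ k ih => rw [Finset.sum_range_succ, ih]; push_cast; ring

lemma sum_range_sq' (t : ℕ) : ∑ x ∈ range t, (x:ℝ)^2 = t*(t-1)*(2*t-1)/6 := by
  induction t with
  | zero => simp
  | succ k ih => rw [Finset.sum_range_succ, ih]; push_cast; ring

lemma sum_fin_id (N : ℕ) : ∑ a : Fin N, (a:ℝ) = N*(N-1)/2 := by
  rw [Fin.sum_univ_eq_sum_range (fun x => (x:ℝ)), sum_range_id']

lemma sum_fin_sq (N : ℕ) : ∑ a : Fin N, (a:ℝ)^2 = N*(N-1)*(2*N-1)/6 := by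
  rw [Fin.sum_univ_eq_sum_range (fun x => (x:ℝ)^2), sum_range_sq']

lemma inj2 {n : ℕ} {i j : Fin n} (hij : i ≠ j) : Function.Injective ![i, j] := by
  intro a b h
  fin_cases a <;> fin_cases b <;> simp_all

lemma inj3 {n : ℕ} {i j k : Fin n} (h1 : i ≠ j) (h2 : i ≠ k) (h3 : j ≠ k) :
    Function.Injective ![i, j, k] := by
  intro a b h
  fin_cases a <;> fin_cases b <;> simp_all

lemma inj4 {n : ℕ} {i j k l : Fin n} (h1 : i ≠ j) (h2 : i ≠ k) (h3 : i ≠ l)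
    (h4 : j ≠ k) (h5 : j ≠ l) (h6 : k ≠ l) : Function.Injective ![i, j, k, l] := by
  intro a b h
  fin_cases a <;> fin_cases b <;> simp_all

example (i j k : Fin 5) (w : Fin 5 → ℕ) : w (![i,j,k] 2) = w k := by
  simp

section core
variable {n N : ℕ}

lemma base2 {N : ℕ} : ∑ v : Fin 2 → Fin N, (if v 1 < v 0 then (1:ℝ) else 0)
    = (N:ℝ)*((N:ℝ)-1)/2 := by
  rw [sum_pi_two]
  simp only [Matrix.cons_val_one, Matrix.head_cons, Matrix.cons_val_zero]
  erw [Finset.sum_congr rfl (fun a _ => sum_if_lt a)]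
  exact sum_fin_id N

lemma pair_sum {i j : Fin n} (hij : i ≠ j) :
    ∑ w : Fin n → Fin N, (if w j < w i then (1:ℝ) else 0) =
      (N:ℝ)^(n-2) * ((N:ℝ)*((N:ℝ)-1)/2) := by
  have h := sum_marg (N := N) (inj2 hij)
    (fun v : Fin 2 → Fin N => if v 1 < v 0 then (1:ℝ) else 0)
  simp only [Matrix.cons_val_one, Matrix.head_cons, Matrix.cons_val_zero, Fintype.card_fin] at h
  erw [h, base2]

lemma sum_fin_one (N : ℕ) : ∑ _a : Fin N, (1:ℝ) = N := by simp

lemma sum_fin_rev_mul_rev (N : ℕ) :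
    ∑ a : Fin N, ((N:ℝ)-1-((a:ℕ):ℝ))*((N:ℝ)-1-((a:ℕ):ℝ))
      = (N:ℝ)*((N:ℝ)-1)*(2*(N:ℝ)-1)/6 := by
  have key : ∀ a : Fin N, ((N:ℝ)-1-((a:ℕ):ℝ))*((N:ℝ)-1-((a:ℕ):ℝ))
      = (((N:ℝ)-1)*((N:ℝ)-1)) * 1 - (2*((N:ℝ)-1))*((a:ℕ):ℝ) + ((a:ℕ):ℝ)^2 := by
    intro a; ring
  rw [Finset.sum_congr rfl (fun a _ => key a), Finset.sum_add_distrib,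
    Finset.sum_sub_distrib, ← Finset.mul_sum, ← Finset.mul_sum,
    sum_fin_id, sum_fin_sq, sum_fin_one]
  ring

lemma sum_fin_rev_mul_id (N : ℕ) :
    ∑ a : Fin N, ((N:ℝ)-1-((a:ℕ):ℝ))*((a:ℕ):ℝ)
      = (N:ℝ)*((N:ℝ)-1)*((N:ℝ)-2)/6 := by
  have key : ∀ a : Fin N, ((N:ℝ)-1-((a:ℕ):ℝ))*((a:ℕ):ℝ)
      = (((N:ℝ)-1)*((N:ℝ)-1)) * 1 - (((N:ℝ)-1)*((N:ℝ)-1)) * 1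
        + ((N:ℝ)-1)*((a:ℕ):ℝ) - ((a:ℕ):ℝ)^2 := by
    intro a; ring
  rw [Finset.sum_congr rfl (fun a _ => key a)]
  rw [Finset.sum_sub_distrib, Finset.sum_add_distrib, Finset.sum_sub_distrib,
    ← Finset.mul_sum, ← Finset.mul_sum]
  rw [sum_fin_id, sum_fin_sq, sum_fin_one]
  ring

lemma sum_fin_mul_self (N : ℕ) :
    ∑ a : Fin N, ((a:ℕ):ℝ)*((a:ℕ):ℝ) = (N:ℝ)*((N:ℝ)-1)*(2*(N:ℝ)-1)/6 := by
  have key : ∀ a : Fin N, ((a:ℕ):ℝ)*((a:ℕ):ℝ) = ((a:ℕ):ℝ)^2 := fun a => by ring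
  rw [Finset.sum_congr rfl (fun a _ => key a), sum_fin_sq]

lemma base3_1 {N : ℕ} :
    ∑ v : Fin 3 → Fin N, ((if v 1 < v 0 then (1:ℝ) else 0) * (if v 2 < v 0 then (1:ℝ) else 0))
      = (N:ℝ)*((N:ℝ)-1)*(2*(N:ℝ)-1)/6 := by
  rw [sum_pi_three]
  simp only [Matrix.cons_val_one, Matrix.head_cons, Matrix.cons_val_zero, Matrix.cons_val_two,
    Matrix.tail_cons]
  have key : ∀ a : Fin N,
      (∑ b : Fin N, ∑ c : Fin N,
        ((if b < a then (1:ℝ) else 0) * (if c < a then (1:ℝ) else 0)))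
      = ((a:ℕ):ℝ)*((a:ℕ):ℝ) := by
    intro a
    rw [← Finset.sum_mul_sum, sum_if_lt]
  erw [Finset.sum_congr rfl (fun a _ => key a), sum_fin_mul_self]

lemma sum_fin_id_mul_rev (N : ℕ) :
    ∑ a : Fin N, ((a:ℕ):ℝ)*((N:ℝ)-1-((a:ℕ):ℝ))
      = (N:ℝ)*((N:ℝ)-1)*((N:ℝ)-2)/6 := by
  have key : ∀ a : Fin N, ((a:ℕ):ℝ)*((N:ℝ)-1-((a:ℕ):ℝ))
      = ((N:ℝ)-1-((a:ℕ):ℝ))*((a:ℕ):ℝ) := fun a => by ring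
  rw [Finset.sum_congr rfl (fun a _ => key a), sum_fin_rev_mul_id]

lemma base3_2 {N : ℕ} :
    ∑ v : Fin 3 → Fin N, ((if v 0 < v 1 then (1:ℝ) else 0) * (if v 0 < v 2 then (1:ℝ) else 0))
      = (N:ℝ)*((N:ℝ)-1)*(2*(N:ℝ)-1)/6 := by
  rw [sum_pi_three]
  simp only [Matrix.cons_val_one, Matrix.head_cons, Matrix.cons_val_zero, Matrix.cons_val_two,
    Matrix.tail_cons]
  have key : ∀ a : Fin N,
      (∑ b : Fin N, ∑ c : Fin N,
        ((if a < b then (1:ℝ) else 0) * (if a < c then (1:ℝ) else 0)))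
      = ((N:ℝ)-1-((a:ℕ):ℝ))*((N:ℝ)-1-((a:ℕ):ℝ)) := by
    intro a
    rw [← Finset.sum_mul_sum, sum_if_gt]
  erw [Finset.sum_congr rfl (fun a _ => key a), sum_fin_rev_mul_rev]

lemma base3_3 {N : ℕ} :
    ∑ v : Fin 3 → Fin N, ((if v 0 < v 1 then (1:ℝ) else 0) * (if v 2 < v 0 then (1:ℝ) else 0))
      = (N:ℝ)*((N:ℝ)-1)*((N:ℝ)-2)/6 := by
  rw [sum_pi_three]
  simp only [Matrix.cons_val_one, Matrix.head_cons, Matrix.cons_val_zero, Matrix.cons_val_two,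
    Matrix.tail_cons]
  have key : ∀ a : Fin N,
      (∑ b : Fin N, ∑ c : Fin N,
        ((if a < b then (1:ℝ) else 0) * (if c < a then (1:ℝ) else 0)))
      = ((N:ℝ)-1-((a:ℕ):ℝ))*((a:ℕ):ℝ) := by
    intro a
    rw [← Finset.sum_mul_sum, sum_if_gt, sum_if_lt]
  erw [Finset.sum_congr rfl (fun a _ => key a), sum_fin_rev_mul_id]

lemma base3_4 {N : ℕ} :
    ∑ v : Fin 3 → Fin N, ((if v 1 < v 0 then (1:ℝ) else 0) * (if v 0 < v 2 then (1:ℝ) else 0))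
      = (N:ℝ)*((N:ℝ)-1)*((N:ℝ)-2)/6 := by
  rw [sum_pi_three]
  simp only [Matrix.cons_val_one, Matrix.head_cons, Matrix.cons_val_zero, Matrix.cons_val_two,
    Matrix.tail_cons]
  have key : ∀ a : Fin N,
      (∑ b : Fin N, ∑ c : Fin N,
        ((if b < a then (1:ℝ) else 0) * (if a < c then (1:ℝ) else 0)))
      = ((a:ℕ):ℝ)*((N:ℝ)-1-((a:ℕ):ℝ)) := by
    intro a
    rw [← Finset.sum_mul_sum, sum_if_gt, sum_if_lt]
  erw [Finset.sum_congr rfl (fun a _ => key a), sum_fin_id_mul_rev]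

lemma base4 {N : ℕ} :
    ∑ v : Fin 4 → Fin N, ((if v 1 < v 0 then (1:ℝ) else 0) * (if v 3 < v 2 then (1:ℝ) else 0))
      = ((N:ℝ)*((N:ℝ)-1)/2)^2 := by
  rw [sum_pi_four]
  simp only [Matrix.cons_val_one, Matrix.head_cons, Matrix.cons_val_zero, Matrix.cons_val_two,
    Matrix.tail_cons, Matrix.cons_val_three]
  have key1 : ∀ a b : Fin N,
      (∑ c : Fin N, ∑ d : Fin N,
        ((if b < a then (1:ℝ) else 0) * (if d < c then (1:ℝ) else 0)))
      = (if b < a then (1:ℝ) else 0) * ((N:ℝ)*((N:ℝ)-1)/2) := by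
    intro a b
    simp only [← Finset.mul_sum]
    congr 1
    rw [Finset.sum_congr rfl (fun c _ => sum_if_lt c), sum_fin_id]
  erw [Finset.sum_congr rfl (fun a _ => Finset.sum_congr rfl (fun b _ => key1 a b))]
  simp only [← Finset.sum_mul]
  rw [Finset.sum_congr rfl (fun a _ => sum_if_lt a), sum_fin_id]
  ring

lemma triple_sum_1 {i j k : Fin n} (h1 : i ≠ j) (h2 : i ≠ k) (h3 : j ≠ k) :
    ∑ w : Fin n → Fin N, ((if w j < w i then (1:ℝ) else 0) * (if w k < w i then (1:ℝ) else 0))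
      = (N:ℝ)^(n-3) * ((N:ℝ)*((N:ℝ)-1)*(2*(N:ℝ)-1)/6) := by
  have h := sum_marg (N := N) (inj3 h1 h2 h3)
    (fun v : Fin 3 → Fin N => (if v 1 < v 0 then (1:ℝ) else 0) * (if v 2 < v 0 then (1:ℝ) else 0))
  simp only [Matrix.cons_val_one, Matrix.head_cons, Matrix.cons_val_zero, Matrix.cons_val_two,
    Matrix.tail_cons, Fintype.card_fin] at h
  erw [h, base3_1]

lemma triple_sum_2 {i j k : Fin n} (h1 : j ≠ i) (h2 : j ≠ k) (h3 : i ≠ k) :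
    ∑ w : Fin n → Fin N, ((if w j < w i then (1:ℝ) else 0) * (if w j < w k then (1:ℝ) else 0))
      = (N:ℝ)^(n-3) * ((N:ℝ)*((N:ℝ)-1)*(2*(N:ℝ)-1)/6) := by
  have h := sum_marg (N := N) (inj3 h1 h2 h3)
    (fun v : Fin 3 → Fin N => (if v 0 < v 1 then (1:ℝ) else 0) * (if v 0 < v 2 then (1:ℝ) else 0))
  simp only [Matrix.cons_val_one, Matrix.head_cons, Matrix.cons_val_zero, Matrix.cons_val_two,
    Matrix.tail_cons, Fintype.card_fin] at h
  erw [h, base3_2]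

lemma triple_sum_3 {i j k : Fin n} (h1 : j ≠ i) (h2 : j ≠ k) (h3 : i ≠ k) :
    ∑ w : Fin n → Fin N, ((if w j < w i then (1:ℝ) else 0) * (if w k < w j then (1:ℝ) else 0))
      = (N:ℝ)^(n-3) * ((N:ℝ)*((N:ℝ)-1)*((N:ℝ)-2)/6) := by
  have h := sum_marg (N := N) (inj3 h1 h2 h3)
    (fun v : Fin 3 → Fin N => (if v 0 < v 1 then (1:ℝ) else 0) * (if v 2 < v 0 then (1:ℝ) else 0))
  simp only [Matrix.cons_val_one, Matrix.head_cons, Matrix.cons_val_zero, Matrix.cons_val_two,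
    Matrix.tail_cons, Fintype.card_fin] at h
  erw [h, base3_3]

lemma triple_sum_4 {i j k : Fin n} (h1 : i ≠ j) (h2 : i ≠ k) (h3 : j ≠ k) :
    ∑ w : Fin n → Fin N, ((if w j < w i then (1:ℝ) else 0) * (if w i < w k then (1:ℝ) else 0))
      = (N:ℝ)^(n-3) * ((N:ℝ)*((N:ℝ)-1)*((N:ℝ)-2)/6) := by
  have h := sum_marg (N := N) (inj3 h1 h2 h3)
    (fun v : Fin 3 → Fin N => (if v 1 < v 0 then (1:ℝ) else 0) * (if v 0 < v 2 then (1:ℝ) else 0))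
  simp only [Matrix.cons_val_one, Matrix.head_cons, Matrix.cons_val_zero, Matrix.cons_val_two,
    Matrix.tail_cons, Fintype.card_fin] at h
  erw [h, base3_4]

lemma quad_sum {i j k l : Fin n} (h1 : i ≠ j) (h2 : i ≠ k) (h3 : i ≠ l)
    (h4 : j ≠ k) (h5 : j ≠ l) (h6 : k ≠ l) :
    ∑ w : Fin n → Fin N, ((if w j < w i then (1:ℝ) else 0) * (if w l < w k then (1:ℝ) else 0))
      = (N:ℝ)^(n-4) * ((N:ℝ)*((N:ℝ)-1)/2)^2 := by
  have h := sum_marg (N := N) (inj4 h1 h2 h3 h4 h5 h6)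
    (fun v : Fin 4 → Fin N => (if v 1 < v 0 then (1:ℝ) else 0) * (if v 3 < v 2 then (1:ℝ) else 0))
  simp only [Matrix.cons_val_one, Matrix.head_cons, Matrix.cons_val_zero, Matrix.cons_val_two,
    Matrix.tail_cons, Matrix.cons_val_three, Fintype.card_fin] at h
  erw [h, base4]

lemma nge {r : ℕ} {ι : Fin r → Fin n} (hι : Function.Injective ι) : r ≤ n := by
  have := Fintype.card_le_of_injective ι hι
  simpa using this

lemma master (hN : 0 < N) {i j k l : Fin n} (hp : i < j) (hq : k < l) :
    ∑ w : Fin n → Fin N, ((if w j < w i then (1:ℝ) else 0) * (if w l < w k then (1:ℝ) else 0))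
    = (N:ℝ)^n * ( (((N:ℝ)-1)/(2*(N:ℝ)))^2
        + (((N:ℝ)^2-1)/(12*(N:ℝ)^2)) *
          ((if i = k then (1:ℝ) else 0) + (if j = l then (1:ℝ) else 0)
            - (if j = k then (1:ℝ) else 0) - (if i = l then (1:ℝ) else 0))
        + (if i = k ∧ j = l then (1:ℝ) else 0) *
            (((N:ℝ)-1)/(2*(N:ℝ)) - (((N:ℝ)-1)/(2*(N:ℝ)))^2
              - 2*(((N:ℝ)^2-1)/(12*(N:ℝ)^2))) ) := by
  have hNR : ((N:ℝ)) ≠ 0 := Nat.cast_ne_zero.mpr hN.ne'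
  by_cases h11 : i = k
  · subst h11
    by_cases h22 : j = l
    · -- p = q
      subst h22
      have hsq : ∀ w : Fin n → Fin N,
          ((if w j < w i then (1:ℝ) else 0) * (if w j < w i then (1:ℝ) else 0))
            = if w j < w i then (1:ℝ) else 0 := by
        intro w; by_cases h : w j < w i <;> simp [h]
      rw [Finset.sum_congr rfl (fun w _ => hsq w), pair_sum hp.ne]
      have hn2 : 2 ≤ n := nge (inj2 hp.ne)
      simp only [if_pos rfl, if_pos (And.intro rfl rfl), if_neg hp.ne', if_neg hp.ne, eq_self_iff_true, if_true, true_and, and_true]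
      have hpow : (N:ℝ)^n = (N:ℝ)^(n-2) * (N:ℝ)^2 := by
        rw [← pow_add]; congr 1; omega
      rw [hpow]
      field_simp
      ring
    · -- i = k, j ≠ l
      have hjl : j ≠ l := h22
      rw [triple_sum_1 hp.ne hq.ne hjl]
      have hn3 : 3 ≤ n := nge (inj3 hp.ne hq.ne hjl)
      simp only [eq_self_iff_true, if_true, true_and, and_true, if_neg h22, if_neg hp.ne', if_neg hq.ne]
      have hpow : (N:ℝ)^n = (N:ℝ)^(n-3) * (N:ℝ)^3 := by
        rw [← pow_add]; congr 1; omega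
      rw [hpow]
      field_simp
      ring
  · by_cases h22 : j = l
    · -- j = l, i ≠ k
      subst h22
      rw [triple_sum_2 hp.ne' hq.ne' h11]
      have hn3 : 3 ≤ n := nge (inj3 hp.ne' hq.ne' h11)
      simp only [eq_self_iff_true, if_true, true_and, and_true, if_neg h11, if_neg hq.ne', if_neg hp.ne]
      have hpow : (N:ℝ)^n = (N:ℝ)^(n-3) * (N:ℝ)^3 := by
        rw [← pow_add]; congr 1; omega
      rw [hpow]
      field_simp
      ring
    · by_cases h21 : j = k
      · -- j = k
        subst h21
        have hil : i ≠ l := (hp.trans hq).ne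
        rw [triple_sum_3 hp.ne' hq.ne hil]
        have hn3 : 3 ≤ n := nge (inj3 hp.ne' hq.ne hil)
        simp only [eq_self_iff_true, if_true, true_and, and_true, if_neg h11, if_neg h22, if_neg hil, if_neg (show ¬(i = j ∧ j = l) from fun h => h11 h.1)]
        have hpow : (N:ℝ)^n = (N:ℝ)^(n-3) * (N:ℝ)^3 := by
          rw [← pow_add]; congr 1; omega
        rw [hpow]
        field_simp
        ring
      · by_cases h12 : i = l
        · -- i = l
          subst h12
          have hjk : j ≠ k := (hq.trans hp).ne'
          rw [triple_sum_4 hp.ne hq.ne' hjk]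
          have hn3 : 3 ≤ n := nge (inj3 hp.ne hq.ne' hjk)
          simp only [eq_self_iff_true, if_true, true_and, and_true, if_neg h11, if_neg h22, if_neg h21, if_neg (show ¬(i = k ∧ j = i) from fun h => h11 h.1)]
          have hpow : (N:ℝ)^n = (N:ℝ)^(n-3) * (N:ℝ)^3 := by
            rw [← pow_add]; congr 1; omega
          rw [hpow]
          field_simp
          ring
        · -- all distinct
          rw [quad_sum hp.ne h11 h12 h21 h22 hq.ne]
          have hn4 : 4 ≤ n := nge (inj4 hp.ne h11 h12 h21 h22 hq.ne)
          simp only [if_neg h11, if_neg h22, if_neg h21, if_neg h12,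
            if_neg (fun h : i = k ∧ j = l => h11 h.1)]
          have hpow : (N:ℝ)^n = (N:ℝ)^(n-4) * (N:ℝ)^4 := by
            rw [← pow_add]; congr 1; omega
          rw [hpow]
          field_simp
          ring
end core

section count
variable {n : ℕ}

local notation "P" => Finset.filter (fun p : Fin n × Fin n => Prod.fst p < Prod.snd p) Finset.univ

lemma sum_fin_rev (N : ℕ) : ∑ a : Fin N, ((N:ℝ)-1-((a:ℕ):ℝ)) = (N:ℝ)*((N:ℝ)-1)/2 := by
  rw [Finset.sum_sub_distrib, Finset.sum_sub_distrib, sum_fin_id]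
  simp only [Finset.sum_const, Finset.card_univ, Fintype.card_fin, nsmul_eq_mul]
  ring

lemma sumP (f : Fin n × Fin n → ℝ) :
    ∑ p ∈ P, f p = ∑ a : Fin n, ∑ b : Fin n, (if a < b then f (a, b) else 0) := by
  rw [Finset.sum_filter, Fintype.sum_prod_type]

lemma sumP_one : ∑ _p ∈ P, (1:ℝ) = (n:ℝ)*((n:ℝ)-1)/2 := by
  rw [sumP]
  have key : ∀ a : Fin n, (∑ b : Fin n, if a < b then (1:ℝ) else 0)
      = (n:ℝ)-1-((a:ℕ):ℝ) := fun a => sum_if_gt a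
  rw [Finset.sum_congr rfl (fun a _ => key a), sum_fin_rev]

lemma sumP_fst_eq (x : Fin n) :
    ∑ q ∈ P, (if x = q.1 then (1:ℝ) else 0) = (n:ℝ)-1-((x:ℕ):ℝ) := by
  rw [sumP]
  have key : ∀ a : Fin n, (∑ b : Fin n, if a < b then (if x = a then (1:ℝ) else 0) else 0)
      = (if a = x then (1:ℝ) else 0) * ((n:ℝ)-1-((a:ℕ):ℝ)) := by
    intro a
    have h1 : ∀ b : Fin n, (if a < b then (if x = a then (1:ℝ) else 0) else 0)
        = (if a = x then (1:ℝ) else 0) * (if a < b then (1:ℝ) else 0) := by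
      intro b
      by_cases h : a < b <;> by_cases h' : a = x <;> simp [h, h', @eq_comm _ x a]
    rw [Finset.sum_congr rfl (fun b _ => h1 b), ← Finset.mul_sum, sum_if_gt]
  rw [Finset.sum_congr rfl (fun a _ => key a)]
  have key2 : ∀ a : Fin n, (if a = x then (1:ℝ) else 0) * ((n:ℝ)-1-((a:ℕ):ℝ))
      = if a = x then ((n:ℝ)-1-((a:ℕ):ℝ)) else 0 := by
    intro a; by_cases h : a = x <;> simp [h]
  rw [Finset.sum_congr rfl (fun a _ => key2 a), Finset.sum_ite_eq' Finset.univ x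
    (fun a => (n:ℝ)-1-((a:ℕ):ℝ)), if_pos (Finset.mem_univ x)]

lemma sumP_snd_eq (x : Fin n) :
    ∑ q ∈ P, (if x = q.2 then (1:ℝ) else 0) = ((x:ℕ):ℝ) := by
  rw [sumP]
  have key : ∀ a : Fin n, (∑ b : Fin n, if a < b then (if x = b then (1:ℝ) else 0) else 0)
      = if a < x then (1:ℝ) else 0 := by
    intro a
    have h1 : ∀ b : Fin n, (if a < b then (if x = b then (1:ℝ) else 0) else 0)
        = if b = x then (if a < b then (1:ℝ) else 0) else 0 := by
      intro b
      by_cases h : a < b <;> by_cases h' : b = x <;> simp [h, h', @eq_comm _ x b]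
    rw [Finset.sum_congr rfl (fun b _ => h1 b), Finset.sum_ite_eq' Finset.univ x
      (fun b => if a < b then (1:ℝ) else 0), if_pos (Finset.mem_univ x)]
  rw [Finset.sum_congr rfl (fun a _ => key a), sum_if_lt]

lemma sumP_fst_val :
    ∑ p ∈ P, ((p.1:ℕ):ℝ) = (n:ℝ)*((n:ℝ)-1)*((n:ℝ)-2)/6 := by
  rw [sumP]
  have key : ∀ a : Fin n, (∑ b : Fin n, if a < b then ((a:ℕ):ℝ) else 0)
      = ((a:ℕ):ℝ) * ((n:ℝ)-1-((a:ℕ):ℝ)) := by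
    intro a
    have h1 : ∀ b : Fin n, (if a < b then ((a:ℕ):ℝ) else 0)
        = ((a:ℕ):ℝ) * (if a < b then (1:ℝ) else 0) := by
      intro b; by_cases h : a < b <;> simp [h]
    rw [Finset.sum_congr rfl (fun b _ => h1 b), ← Finset.mul_sum, sum_if_gt]
  rw [Finset.sum_congr rfl (fun a _ => key a), sum_fin_id_mul_rev]

lemma sumP_snd_val :
    ∑ p ∈ P, ((p.2:ℕ):ℝ) = (n:ℝ)*((n:ℝ)-1)*(2*(n:ℝ)-1)/6 := by
  rw [sumP]
  have key : ∀ a : Fin n, (∑ b : Fin n, if a < b then ((b:ℕ):ℝ) else 0)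
      = ∑ b : Fin n, ((b:ℕ):ℝ) * (if a < b then (1:ℝ) else 0) := by
    intro a
    refine Finset.sum_congr rfl (fun b _ => ?_)
    by_cases h : a < b <;> simp [h]
  rw [Finset.sum_congr rfl (fun a _ => key a), Finset.sum_comm]
  have key2 : ∀ b : Fin n, (∑ a : Fin n, ((b:ℕ):ℝ) * (if a < b then (1:ℝ) else 0))
      = ((b:ℕ):ℝ) * ((b:ℕ):ℝ) := by
    intro b
    rw [← Finset.mul_sum, sum_if_lt]
  rw [Finset.sum_congr rfl (fun b _ => key2 b), sum_fin_mul_self]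

end count

/-- For `n ≥ 1`, `m ≥ 1`, with `X_1, …, X_n` i.i.d. uniform on `{1,…,2m}`,
the statistic `A_{n,m} = Σ_{1≤i<k≤n} 1{X_i > X_k}` has variance
`n(n−1)(2n+5)/72 · ((2m)² − 1)/(2m)²`. -/
theorem variance_A (n m : ℕ) (hn : 1 ≤ n) (hm : 1 ≤ m) :
    variance (fun w : Fin n → Fin (2*m) =>
        ((∑ p ∈ (Finset.univ : Finset (Fin n × Fin n)).filter (fun p => p.1 < p.2),
          if Xval w p.2 < Xval w p.1 then (1 : ℕ) else 0 : ℕ) : ℝ))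
      (uniformM (Fin n → Fin (2*m))) =
    (n * (n - 1) * (2 * n + 5) / 72) * (((2*m)^2 - 1) / (2*m)^2) := by
  classical
  haveI : Nonempty (Fin n → Fin (2*m)) := ⟨fun _ => ⟨0, by omega⟩⟩
  have hA : (fun w : Fin n → Fin (2*m) =>
        ((∑ p ∈ (Finset.univ : Finset (Fin n × Fin n)).filter (fun p => p.1 < p.2),
          if Xval w p.2 < Xval w p.1 then (1 : ℕ) else 0 : ℕ) : ℝ))
      = fun w => ∑ p ∈ (Finset.univ : Finset (Fin n × Fin n)).filter (fun p => p.1 < p.2),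
          (if w p.2 < w p.1 then (1:ℝ) else 0) := by
    funext w
    push_cast
    refine Finset.sum_congr rfl (fun p _ => ?_)
    have hiff : Xval w p.2 < Xval w p.1 ↔ w p.2 < w p.1 := by
      simp only [Xval, Fin.lt_def]
      omega
    by_cases h : w p.2 < w p.1 <;> simp [hiff, h]
  rw [hA, variance_uniformM]
  have hm0 : 0 < 2*m := by omega
  have hNr0 : ((2*m:ℕ):ℝ) ≠ 0 := Nat.cast_ne_zero.mpr (by omega)
  have hcard : ((Fintype.card (Fin n → Fin (2*m)) : ℕ) : ℝ) = ((2*m:ℕ):ℝ)^n := by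
    rw [Fintype.card_fun, Fintype.card_fin, Fintype.card_fin]
    push_cast
    ring
  rw [hcard]
  have hS1 : (∑ w : Fin n → Fin (2*m), ∑ p ∈ Finset.filter (fun p : Fin n × Fin n => p.1 < p.2) Finset.univ,
      if w p.2 < w p.1 then (1:ℝ) else 0)
      = ((n:ℝ)*((n:ℝ)-1)/2) * (((2*m:ℕ):ℝ)^(n-2) * (((2*m:ℕ):ℝ)*(((2*m:ℕ):ℝ)-1)/2)) := by
    rw [Finset.sum_comm]
    rw [Finset.sum_congr rfl (fun p hp => pair_sum (Finset.mem_filter.mp hp).2.ne)]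
    rw [Finset.sum_const, nsmul_eq_mul, Finset.cast_card, sumP_one]
  have hinner : ∀ p ∈ Finset.filter (fun p : Fin n × Fin n => p.1 < p.2) Finset.univ, (∑ q ∈ Finset.filter (fun p : Fin n × Fin n => p.1 < p.2) Finset.univ, ( ((((2*m:ℕ):ℝ)-1)/(2*((2*m:ℕ):ℝ)))^2 + ((((2*m:ℕ):ℝ)^2-1)/(12*((2*m:ℕ):ℝ)^2)) * ((if p.1 = q.1 then (1:ℝ) else 0) + (if p.2 = q.2 then (1:ℝ) else 0) - (if p.2 = q.1 then (1:ℝ) else 0) - (if p.1 = q.2 then (1:ℝ) else 0)) + (if p.1 = q.1 ∧ p.2 = q.2 then (1:ℝ) else 0) * ((((2*m:ℕ):ℝ)-1)/(2*((2*m:ℕ):ℝ)) - ((((2*m:ℕ):ℝ)-1)/(2*((2*m:ℕ):ℝ)))^2 - 2*((((2*m:ℕ):ℝ)^2-1)/(12*((2*m:ℕ):ℝ)^2))) ))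
      = ((n:ℝ)*((n:ℝ)-1)/2) * ((((2*m:ℕ):ℝ)-1)/(2*((2*m:ℕ):ℝ)))^2 + ((((2*m:ℕ):ℝ)^2-1)/(12*((2*m:ℕ):ℝ)^2)) * ((((n:ℝ)-1-((p.1:ℕ):ℝ)) + ((p.2:ℕ):ℝ))
          - ((n:ℝ)-1-((p.2:ℕ):ℝ)) - ((p.1:ℕ):ℝ))
        + ((((2*m:ℕ):ℝ)-1)/(2*((2*m:ℕ):ℝ)) - ((((2*m:ℕ):ℝ)-1)/(2*((2*m:ℕ):ℝ)))^2 - 2*((((2*m:ℕ):ℝ)^2-1)/(12*((2*m:ℕ):ℝ)^2))) := by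
    intro p hp
    rw [Finset.sum_add_distrib, Finset.sum_add_distrib]
    congr 1
    · congr 1
      · rw [Finset.sum_const, nsmul_eq_mul, Finset.cast_card, sumP_one]
      · rw [← Finset.mul_sum]
        congr 1
        rw [Finset.sum_sub_distrib, Finset.sum_sub_distrib, Finset.sum_add_distrib,
          sumP_fst_eq p.1, sumP_snd_eq p.2, sumP_fst_eq p.2, sumP_snd_eq p.1]
    · have hd : ∀ q : Fin n × Fin n, (if p.1 = q.1 ∧ p.2 = q.2 then (1:ℝ) else 0)
          = if q = p then (1:ℝ) else 0 := by
        intro q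
        by_cases h : q = p
        · subst h; simp
        · have h2 : ¬(p.1 = q.1 ∧ p.2 = q.2) := fun hh => h (Prod.ext hh.1.symm hh.2.symm)
          simp [h, h2]
      rw [← Finset.sum_mul, Finset.sum_congr rfl (fun q _ => hd q),
        Finset.sum_ite_eq' _ p (fun _ => (1:ℝ)), if_pos hp, one_mul]
  have hS2 : (∑ w : Fin n → Fin (2*m), (∑ p ∈ Finset.filter (fun p : Fin n × Fin n => p.1 < p.2) Finset.univ,
      if w p.2 < w p.1 then (1:ℝ) else 0)^2)
      = ((2*m:ℕ):ℝ)^n * ( ((n:ℝ)*((n:ℝ)-1)/2) * (((n:ℝ)*((n:ℝ)-1)/2) * ((((2*m:ℕ):ℝ)-1)/(2*((2*m:ℕ):ℝ)))^2 + ((((2*m:ℕ):ℝ)-1)/(2*((2*m:ℕ):ℝ)) - ((((2*m:ℕ):ℝ)-1)/(2*((2*m:ℕ):ℝ)))^2 - 2*((((2*m:ℕ):ℝ)^2-1)/(12*((2*m:ℕ):ℝ)^2))))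
          + 2*((((2*m:ℕ):ℝ)^2-1)/(12*((2*m:ℕ):ℝ)^2))*((n:ℝ)*((n:ℝ)-1)*(2*(n:ℝ)-1)/6) - 2*((((2*m:ℕ):ℝ)^2-1)/(12*((2*m:ℕ):ℝ)^2))*((n:ℝ)*((n:ℝ)-1)*((n:ℝ)-2)/6) ) := by
    have hsq : ∀ w : Fin n → Fin (2*m),
        (∑ p ∈ Finset.filter (fun p : Fin n × Fin n => p.1 < p.2) Finset.univ, if w p.2 < w p.1 then (1:ℝ) else 0)^2
        = ∑ p ∈ Finset.filter (fun p : Fin n × Fin n => p.1 < p.2) Finset.univ, ∑ q ∈ Finset.filter (fun p : Fin n × Fin n => p.1 < p.2) Finset.univ,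
            ((if w p.2 < w p.1 then (1:ℝ) else 0) * (if w q.2 < w q.1 then (1:ℝ) else 0)) := by
      intro w
      rw [sq, Finset.sum_mul_sum]
    rw [Finset.sum_congr rfl (fun w _ => hsq w), Finset.sum_comm]
    rw [Finset.sum_congr rfl (fun p _ => Finset.sum_comm)]
    have hmas : ∀ p ∈ Finset.filter (fun p : Fin n × Fin n => p.1 < p.2) Finset.univ, ∀ q ∈ Finset.filter (fun p : Fin n × Fin n => p.1 < p.2) Finset.univ,
        (∑ w : Fin n → Fin (2*m),
          ((if w p.2 < w p.1 then (1:ℝ) else 0) * (if w q.2 < w q.1 then (1:ℝ) else 0)))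
        = ((2*m:ℕ):ℝ)^n * ( ((((2*m:ℕ):ℝ)-1)/(2*((2*m:ℕ):ℝ)))^2 + ((((2*m:ℕ):ℝ)^2-1)/(12*((2*m:ℕ):ℝ)^2)) * ((if p.1 = q.1 then (1:ℝ) else 0) + (if p.2 = q.2 then (1:ℝ) else 0) - (if p.2 = q.1 then (1:ℝ) else 0) - (if p.1 = q.2 then (1:ℝ) else 0)) + (if p.1 = q.1 ∧ p.2 = q.2 then (1:ℝ) else 0) * ((((2*m:ℕ):ℝ)-1)/(2*((2*m:ℕ):ℝ)) - ((((2*m:ℕ):ℝ)-1)/(2*((2*m:ℕ):ℝ)))^2 - 2*((((2*m:ℕ):ℝ)^2-1)/(12*((2*m:ℕ):ℝ)^2))) ) := by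
      intro p hp q hq
      exact master hm0 (Finset.mem_filter.mp hp).2 (Finset.mem_filter.mp hq).2
    rw [Finset.sum_congr rfl (fun p hp => Finset.sum_congr rfl (fun q hq => hmas p hp q hq))]
    simp only [← Finset.mul_sum]
    congr 1
    rw [Finset.sum_congr rfl hinner]
    have hpt : ∀ p : Fin n × Fin n,
        (((n:ℝ)*((n:ℝ)-1)/2) * ((((2*m:ℕ):ℝ)-1)/(2*((2*m:ℕ):ℝ)))^2 + ((((2*m:ℕ):ℝ)^2-1)/(12*((2*m:ℕ):ℝ)^2)) * ((((n:ℝ)-1-((p.1:ℕ):ℝ)) + ((p.2:ℕ):ℝ))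
            - ((n:ℝ)-1-((p.2:ℕ):ℝ)) - ((p.1:ℕ):ℝ))
          + ((((2*m:ℕ):ℝ)-1)/(2*((2*m:ℕ):ℝ)) - ((((2*m:ℕ):ℝ)-1)/(2*((2*m:ℕ):ℝ)))^2 - 2*((((2*m:ℕ):ℝ)^2-1)/(12*((2*m:ℕ):ℝ)^2))))
        = (((n:ℝ)*((n:ℝ)-1)/2) * ((((2*m:ℕ):ℝ)-1)/(2*((2*m:ℕ):ℝ)))^2 + ((((2*m:ℕ):ℝ)-1)/(2*((2*m:ℕ):ℝ)) - ((((2*m:ℕ):ℝ)-1)/(2*((2*m:ℕ):ℝ)))^2 - 2*((((2*m:ℕ):ℝ)^2-1)/(12*((2*m:ℕ):ℝ)^2))))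
          + (2*((((2*m:ℕ):ℝ)^2-1)/(12*((2*m:ℕ):ℝ)^2))*((p.2:ℕ):ℝ) - 2*((((2*m:ℕ):ℝ)^2-1)/(12*((2*m:ℕ):ℝ)^2))*((p.1:ℕ):ℝ)) := by
      intro p
      ring
    rw [Finset.sum_congr rfl (fun p _ => hpt p), Finset.sum_add_distrib,
      Finset.sum_sub_distrib, Finset.sum_const, nsmul_eq_mul, Finset.cast_card, sumP_one,
      ← Finset.mul_sum, ← Finset.mul_sum, sumP_snd_val, sumP_fst_val]
    ring
  rw [hS1, hS2]
  rcases Nat.lt_or_ge n 2 with h2 | h2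
  · have hn1 : n = 1 := by omega
    subst hn1
    norm_num
  · have hpow : ((2*m:ℕ):ℝ)^n = ((2*m:ℕ):ℝ)^(n-2) * ((2*m:ℕ):ℝ)^2 := by
      rw [← pow_add]
      congr 1
      omega
    rw [hpow]
    have ht0 : ((2*m:ℕ):ℝ)^(n-2) ≠ 0 := pow_ne_zero _ hNr0
    have hm2 : (2*(m:ℝ)) ≠ 0 := by positivity
    have ht1 : (2*(m:ℝ))^(n-2) ≠ 0 := pow_ne_zero _ hm2
    push_cast at *
    field_simp
    ring
end

section
/- Let m ≥ 1, let X_1 be uniform on {1,…,2m}, let U_1 be uniform on (0,1) independent of X_1, and set h_1(X_1, U_1) = ((X_1 − 1)/(2m))(1 − U_1) + ((2m − X_1)/(2m)) U_1 + 1{X_1 even}/(2m) − 1/2. Then ζ_1² := E[(h_1(X_1, U_1))²] = (m² + 2)/(36 m²). -/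
open MeasureTheory ProbabilityTheory Finset Filter

/-- The uniform probability measure on `(0,1)`. -/
noncomputable def unif01 : Measure ℝ := (volume : Measure ℝ).restrict (Set.Ioo 0 1)

/-- The law of `Z_i = (X_i, U_i)`: `X_i` uniform on `{1,…,2m}` (0-based pile index, value
`x` carries label `x+1`), `U_i` uniform on `(0,1)`, independent. -/
noncomputable def zMeasure (m : ℕ) : Measure (Fin (2*m) × ℝ) :=
  (uniformM (Fin (2*m))).prod unif01

/-- The symmetric kernel
`h((x₁,u₁),(x₂,u₂)) = 1{x₁>x₂}1{u₁<u₂} + 1{x₁<x₂}1{u₁>u₂} + 1{x₁=x₂, x₁ even} − 1/2`,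
where the pile value in `Fin (2*m)` encodes the label `x = (·) + 1 ∈ {1,…,2m}`. -/
noncomputable def hker (m : ℕ) (z1 z2 : Fin (2*m) × ℝ) : ℝ :=
  (if (z2.1 : ℕ) < (z1.1 : ℕ) then 1 else 0) * (if z1.2 < z2.2 then 1 else 0)
  + (if (z1.1 : ℕ) < (z2.1 : ℕ) then 1 else 0) * (if z2.2 < z1.2 then 1 else 0)
  + (if z1.1 = z2.1 ∧ Even ((z1.1 : ℕ) + 1) then 1 else 0) - 1/2

/-- `h₁(X₁,U₁) = ((X₁−1)/(2m))(1−U₁) + ((2m−X₁)/(2m))U₁ + 1{X₁ even}/(2m) − 1/2`,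
where the pile value `z.1 : Fin (2*m)` encodes the label `X₁ = z.1 + 1 ∈ {1,…,2m}`
and `U₁ = z.2`. -/
noncomputable def h1 (m : ℕ) (z : Fin (2*m) × ℝ) : ℝ :=
  ((((z.1 : ℕ) : ℝ) + 1 - 1) / (2*m)) * (1 - z.2)
    + ((2*m - (((z.1 : ℕ) : ℝ) + 1)) / (2*m)) * z.2
    + (if Even ((z.1 : ℕ) + 1) then 1 else 0) / (2*m) - 1/2

/-- Coefficient `A` in the affine representation `h₁(x,u) = A x + B x · u`. -/
noncomputable def Acoef (m : ℕ) (X : ℕ) : ℝ :=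
  ((X : ℝ) + (if Even (X + 1) then 1 else 0)) / (2 * m) - 1 / 2

/-- Coefficient `B` in the affine representation `h₁(x,u) = A x + B x · u`. -/
noncomputable def Bcoef (m : ℕ) (X : ℕ) : ℝ :=
  (2 * (m : ℝ) - 1 - 2 * X) / (2 * m)

lemma h1_repr (m : ℕ) (z : Fin (2 * m) × ℝ) :
    h1 m z = Acoef m (z.1 : ℕ) + Bcoef m (z.1 : ℕ) * z.2 := by
  simp only [h1, Acoef, Bcoef]
  ring

lemma sum_range_double (f : ℕ → ℝ) (m : ℕ) :
    ∑ x ∈ Finset.range (2 * m), f x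
      = ∑ k ∈ Finset.range m, (f (2 * k) + f (2 * k + 1)) := by
  induction m with
  | zero => simp
  | succ n ih =>
    rw [show 2 * (n + 1) = 2 * n + 1 + 1 by ring, Finset.sum_range_succ,
      Finset.sum_range_succ, ih, Finset.sum_range_succ]
    ring

lemma sum_quad (m : ℕ) (a b c : ℝ) :
    ∑ k ∈ Finset.range m, (a * (k : ℝ) ^ 2 + b * k + c)
      = a * (m * (m - 1) * (2 * m - 1) / 6) + b * (m * (m - 1) / 2) + c * m := by
  induction m with
  | zero => simp
  | succ n ih =>
    rw [Finset.sum_range_succ, ih]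
    push_cast
    ring

lemma integral_affine_sq (A B : ℝ) :
    ∫ u in Set.Ioo (0 : ℝ) 1, (A + B * u) ^ 2 = A ^ 2 + A * B + B ^ 2 / 3 := by
  rw [← MeasureTheory.integral_Ioc_eq_integral_Ioo,
    ← intervalIntegral.integral_of_le (by norm_num : (0 : ℝ) ≤ 1)]
  have hderiv : ∀ u ∈ Set.uIcc (0 : ℝ) 1,
      HasDerivAt (fun u : ℝ => A ^ 2 * u + A * B * u ^ 2 + B ^ 2 * u ^ 3 / 3)
        ((A + B * u) ^ 2) u := by
    intro u _
    have h1 : HasDerivAt (fun u : ℝ => A ^ 2 * u) (A ^ 2) u := by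
      simpa using (hasDerivAt_id u).const_mul (A ^ 2)
    have h2 : HasDerivAt (fun u : ℝ => A * B * u ^ 2) (A * B * (2 * u)) u := by
      simpa using (hasDerivAt_pow 2 u).const_mul (A * B)
    have h3 : HasDerivAt (fun u : ℝ => B ^ 2 * u ^ 3 / 3) (B ^ 2 * (3 * u ^ 2) / 3) u := by
      simpa using ((hasDerivAt_pow 3 u).const_mul (B ^ 2)).div_const 3
    exact ((h1.add h2).add h3).congr_deriv (by ring)
  rw [intervalIntegral.integral_eq_sub_of_hasDerivAt hderiv
    ((Continuous.intervalIntegrable (by continuity) 0 1))]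
  norm_num

lemma abs_Acoef_le (m : ℕ) (hm : 1 ≤ m) (X : ℕ) (hX : X < 2 * m) :
    |Acoef m X| ≤ 1 := by
  have hm' : (1 : ℝ) ≤ (m : ℝ) := by exact_mod_cast hm
  have h2m : (0 : ℝ) < 2 * m := by linarith
  have hXle : (X : ℝ) ≤ 2 * m - 1 := by
    have : (X : ℝ) + 1 ≤ 2 * m := by exact_mod_cast hX
    linarith
  have he : (0 : ℝ) ≤ (if Even (X + 1) then (1 : ℝ) else 0) ∧
      (if Even (X + 1) then (1 : ℝ) else 0) ≤ 1 := by
    split <;> norm_num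
  rw [abs_le]
  constructor
  · have : (0 : ℝ) ≤ ((X : ℝ) + (if Even (X + 1) then 1 else 0)) / (2 * m) :=
      div_nonneg (by linarith [he.1, Nat.cast_nonneg (α := ℝ) X]) h2m.le
    simp only [Acoef]; linarith
  · have : ((X : ℝ) + (if Even (X + 1) then 1 else 0)) / (2 * m) ≤ 1 :=
      (div_le_one h2m).mpr (by linarith [he.2])
    simp only [Acoef]; linarith

lemma abs_Bcoef_le (m : ℕ) (hm : 1 ≤ m) (X : ℕ) (hX : X < 2 * m) :
    |Bcoef m X| ≤ 1 := by
  have hm' : (1 : ℝ) ≤ (m : ℝ) := by exact_mod_cast hm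
  have h2m : (0 : ℝ) < 2 * m := by linarith
  have hXle : (X : ℝ) ≤ 2 * m - 1 := by
    have : (X : ℝ) + 1 ≤ 2 * m := by exact_mod_cast hX
    linarith
  have hX0 : (0 : ℝ) ≤ X := Nat.cast_nonneg X
  rw [Bcoef, abs_le]
  constructor
  · rw [neg_le, ← neg_div]
    exact (div_le_one h2m).mpr (by linarith)
  · exact (div_le_one h2m).mpr (by linarith)

/-- For `m ≥ 1`, with `X_1` uniform on `{1,…,2m}` and `U_1` uniform on
`(0,1)` independent of `X_1`, `ζ₁² := E[(h₁(X₁,U₁))²] = (m² + 2)/(36 m²)`. -/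
theorem h1_second_moment (m : ℕ) (hm : 1 ≤ m) :
    ∫ z, (h1 m z)^2 ∂(zMeasure m) = (m^2 + 2) / (36 * m^2) := by
  have hm' : (1 : ℝ) ≤ (m : ℝ) := by exact_mod_cast hm
  have hmne : (m : ℝ) ≠ 0 := by positivity
  -- finiteness of the measures
  haveI : IsFiniteMeasure (uniformM (Fin (2 * m))) := by
    constructor
    rw [uniformM]
    simp only [Measure.smul_apply, Measure.count_univ, smul_eq_mul]
    exact ENNReal.mul_lt_top (lt_of_le_of_lt (ENNReal.inv_le_one.mpr (by
        simp only [Fintype.card_fin]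
        exact_mod_cast Nat.one_le_iff_ne_zero.mpr (by omega))) ENNReal.one_lt_top)
      (by simp; exact ENNReal.mul_lt_top ENNReal.ofNat_lt_top (ENNReal.natCast_lt_top m))
  haveI : IsFiniteMeasure unif01 := by
    constructor
    rw [unif01, Measure.restrict_apply MeasurableSet.univ]
    simp [Real.volume_Ioo]
  -- measurability
  have hmeasA : Measurable fun z : Fin (2 * m) × ℝ => Acoef m (z.1 : ℕ) :=
    (measurable_of_countable (fun x : Fin (2 * m) => Acoef m (x : ℕ))).comp measurable_fst
  have hmeasB : Measurable fun z : Fin (2 * m) × ℝ => Bcoef m (z.1 : ℕ) :=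
    (measurable_of_countable (fun x : Fin (2 * m) => Bcoef m (x : ℕ))).comp measurable_fst
  have hmeash : Measurable fun z : Fin (2 * m) × ℝ => (h1 m z) ^ 2 := by
    have : (fun z : Fin (2 * m) × ℝ => (h1 m z) ^ 2)
        = fun z => (Acoef m (z.1 : ℕ) + Bcoef m (z.1 : ℕ) * z.2) ^ 2 := by
      funext z; rw [h1_repr]
    rw [this]
    exact ((hmeasA.add (hmeasB.mul measurable_snd)).pow_const 2)
  haveI : IsFiniteMeasure (zMeasure m) := by unfold zMeasure; infer_instance
  -- a.e. the second coordinate is in (0,1)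
  have hae : ∀ᵐ z ∂(zMeasure m), z.2 ∈ Set.Ioo (0 : ℝ) 1 := by
    rw [ae_iff]
    have hset : {z : Fin (2 * m) × ℝ | ¬ z.2 ∈ Set.Ioo (0 : ℝ) 1}
        = (Set.univ : Set (Fin (2 * m))) ×ˢ (Set.Ioo (0 : ℝ) 1)ᶜ := by
      ext z; simp
    rw [zMeasure, hset, Measure.prod_prod]
    have : unif01 ((Set.Ioo (0 : ℝ) 1)ᶜ) = 0 := by
      rw [unif01, Measure.restrict_apply measurableSet_Ioo.compl]
      simp
    rw [this, mul_zero]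
  -- integrability
  have hint : Integrable (fun z => (h1 m z) ^ 2) (zMeasure m) := by
    refine ⟨hmeash.aestronglyMeasurable, ?_⟩
    apply HasFiniteIntegral.of_bounded (C := 4)
    filter_upwards [hae] with z hz
    rw [h1_repr]
    have hA := abs_Acoef_le m hm (z.1 : ℕ) z.1.isLt
    have hB := abs_Bcoef_le m hm (z.1 : ℕ) z.1.isLt
    have hu : |z.2| ≤ 1 := by
      rw [abs_le]; exact ⟨by linarith [hz.1], hz.2.le⟩
    have habs : |Acoef m (z.1 : ℕ) + Bcoef m (z.1 : ℕ) * z.2| ≤ 2 := by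
      calc |Acoef m (z.1 : ℕ) + Bcoef m (z.1 : ℕ) * z.2|
          ≤ |Acoef m (z.1 : ℕ)| + |Bcoef m (z.1 : ℕ) * z.2| := abs_add_le _ _
        _ ≤ 1 + 1 := by
            gcongr
            rw [abs_mul]
            exact mul_le_one₀ hB (abs_nonneg _) hu
        _ = 2 := by norm_num
    have h1' : (Acoef m (z.1 : ℕ) + Bcoef m (z.1 : ℕ) * z.2) ^ 2 ≤ 4 := by
      have := abs_le.mp habs
      nlinarith [this.1, this.2]
    rw [Real.norm_eq_abs, abs_of_nonneg (sq_nonneg _)]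
    exact h1'
  -- Fubini
  rw [zMeasure] at hint ⊢
  rw [MeasureTheory.integral_prod _ hint]
  -- inner integral
  have hinner : ∀ x : Fin (2 * m), ∫ u, (h1 m (x, u)) ^ 2 ∂unif01
      = Acoef m (x : ℕ) ^ 2 + Acoef m (x : ℕ) * Bcoef m (x : ℕ) + Bcoef m (x : ℕ) ^ 2 / 3 := by
    intro x
    have : ∀ u : ℝ, (h1 m (x, u)) ^ 2 = (Acoef m (x : ℕ) + Bcoef m (x : ℕ) * u) ^ 2 := by
      intro u; rw [h1_repr]
    simp_rw [this]
    rw [unif01]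
    exact integral_affine_sq _ _
  simp_rw [hinner]
  -- outer integral over the finite uniform measure
  rw [MeasureTheory.integral_fintype (Integrable.of_finite)]
  have hμx : ∀ x : Fin (2 * m), (uniformM (Fin (2 * m)) {x}).toReal = 1 / (2 * m : ℝ) := by
    intro x
    rw [uniformM]
    simp only [Measure.smul_apply, Measure.count_singleton, smul_eq_mul, mul_one,
      Fintype.card_fin]
    rw [ENNReal.toReal_inv]
    simp
  simp_rw [Measure.real, hμx, smul_eq_mul]
  -- turn into a sum over `range (2*m)`
  rw [Fin.sum_univ_eq_sum_range
    (fun X => (1 / (2 * m : ℝ)) * (Acoef m X ^ 2 + Acoef m X * Bcoef m X + Bcoef m X ^ 2 / 3))]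
  rw [← Finset.mul_sum]
  rw [sum_range_double (fun X => Acoef m X ^ 2 + Acoef m X * Bcoef m X + Bcoef m X ^ 2 / 3)]
  -- per-pair identity
  have hpair : ∀ k : ℕ,
      ((Acoef m (2 * k) ^ 2 + Acoef m (2 * k) * Bcoef m (2 * k) + Bcoef m (2 * k) ^ 2 / 3)
        + (Acoef m (2 * k + 1) ^ 2 + Acoef m (2 * k + 1) * Bcoef m (2 * k + 1)
            + Bcoef m (2 * k + 1) ^ 2 / 3))
      = (2 / (3 * (m : ℝ) ^ 2)) * (k : ℝ) ^ 2 + ((2 - 2 * (m : ℝ)) / (3 * (m : ℝ) ^ 2)) * k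
          + ((m : ℝ) ^ 2 - 2 * m + 2) / (6 * (m : ℝ) ^ 2) := by
    intro k
    have he1 : ¬ Even (2 * k + 1) := by simp [Nat.even_add_one, parity_simps]
    have he2 : Even (2 * k + 1 + 1) := by
      refine ⟨k + 1, by ring⟩
    simp only [Acoef, Bcoef, he1, he2, if_true, if_false]
    push_cast
    field_simp
    ring
  rw [Finset.sum_congr rfl (fun k _ => hpair k), sum_quad]
  field_simp
  ring
end

section
/- Let n ≥ 2, m ≥ 1. Let X_1,…,X_n be i.i.d. uniform on {1,…,2m}, let U_1,…,U_n be i.i.d. uniform on (0,1) independent of the X's, set Z_i = (X_i, U_i), and let h((x_1,u_1),(x_2,u_2)) = 1{x_1>x_2}1{u_1<u_2} + 1{x_1<x_2}1{u_1>u_2} + 1{x_1 = x_2 and x_1 even} − 1/2. Then W_{n,m} := (1/C(n,2)) · (I_{n,m} − C(n,2)/2) satisfies the distributional identity W_{n,m} =_d (1/C(n,2)) Σ_{1≤i<k≤n} h(Z_i, Z_k); that is, W_{n,m} is equal in distribution to an order-2 U-statistic with symmetric kernel h. -/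
open MeasureTheory ProbabilityTheory Finset Filter

/-! ### Auxiliary lemmas -/

section Aux
variable {n m : ℕ}

lemma invCount_eq_inv (π : Equiv.Perm (Fin n)) :
    invCount π = ((Finset.univ : Finset (Fin n × Fin n)).filter
      (fun p => p.1 < p.2 ∧ π⁻¹ p.2 < π⁻¹ p.1)).card := by
  unfold invCount
  apply Finset.card_bij' (fun p _ => (π p.2, π p.1)) (fun p _ => (π⁻¹ p.2, π⁻¹ p.1))
  · intro p hp
    simp only [Finset.mem_filter, Finset.mem_univ, true_and] at hp ⊢
    simpa using hp.symm
  · intro p hp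
    simp only [Finset.mem_filter, Finset.mem_univ, true_and] at hp ⊢
    simpa using hp.symm
  · intro p hp; simp
  · intro p hp; simp

lemma shelfKey_injective (w : Fin n → Fin (2*m)) : Function.Injective (shelfKey w) := by
  intro i k h
  unfold shelfKey at h
  have h' : (w i, if Even (Xval w i) then -(i : ℤ) else (i : ℤ))
      = (w k, if Even (Xval w k) then -(k : ℤ) else (k : ℤ)) := toLex.injective h
  have h1 : w i = w k := congrArg Prod.fst h'
  have h2 := congrArg Prod.snd h'
  simp only at h1 h2
  have hx : Xval w i = Xval w k := by unfold Xval; rw [h1]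
  rw [hx] at h2
  by_cases he : Even (Xval w k) <;> simp [he] at h2 <;> exact Fin.ext (by omega)

lemma strictMono_key (w : Fin n → Fin (2*m)) :
    StrictMono (shelfKey w ∘ Tuple.sort (shelfKey w)) :=
  (Tuple.monotone_sort _).strictMono_of_injective
    ((shelfKey_injective w).comp (Tuple.sort (shelfKey w)).injective)

lemma shelfInv_eq (w : Fin n → Fin (2*m)) :
    shelfInv m n w = ((Finset.univ : Finset (Fin n × Fin n)).filter
      (fun p => p.1 < p.2 ∧ (w p.2 < w p.1 ∨ (w p.1 = w p.2 ∧ Even (Xval w p.1))))).card := by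
  rw [shelfInv, shelfPerm, invCount_eq_inv]
  congr 1
  apply Finset.filter_congr
  intro p _
  have hiff : ∀ i k : Fin n, (Tuple.sort (shelfKey w))⁻¹ k < (Tuple.sort (shelfKey w))⁻¹ i
      ↔ shelfKey w k < shelfKey w i := by
    intro i k
    have h := (strictMono_key w).lt_iff_lt
      (a := (Tuple.sort (shelfKey w))⁻¹ k) (b := (Tuple.sort (shelfKey w))⁻¹ i)
    simp only [Function.comp_apply, Equiv.Perm.inv_def, Equiv.apply_symm_apply] at h
    exact h.symm
  constructor
  · rintro ⟨hlt, h2⟩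
    refine ⟨hlt, ?_⟩
    rw [hiff] at h2
    rw [shelfKey, shelfKey, Prod.Lex.lt_iff] at h2
    rcases h2 with h2 | ⟨heq, h2⟩
    · exact Or.inl h2
    · right
      simp only [ofLex_toLex] at heq h2
      refine ⟨heq.symm, ?_⟩
      have hx : Xval w p.1 = Xval w p.2 := by unfold Xval; rw [heq]
      rw [hx] at h2 ⊢
      by_cases he : Even (Xval w p.2)
      · exact he
      · simp only [he, if_neg, if_false] at h2
        exfalso
        have : (p.2 : ℤ) < (p.1 : ℤ) := h2
        have : p.1 < p.2 := hlt
        omega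
  · rintro ⟨hlt, h2⟩
    refine ⟨hlt, ?_⟩
    rw [hiff]
    rw [shelfKey, shelfKey, Prod.Lex.lt_iff]
    rcases h2 with h2 | ⟨heq, h2⟩
    · exact Or.inl h2
    · right
      simp only [ofLex_toLex]
      refine ⟨heq.symm, ?_⟩
      have hx : Xval w p.1 = Xval w p.2 := by unfold Xval; rw [heq]
      rw [hx] at h2
      simp only [hx, h2, if_pos, if_true]
      have : (p.1 : ℤ) < (p.2 : ℤ) := by exact_mod_cast (Fin.lt_iff_val_lt_val.mp hlt)
      omega

lemma card_filter_lt_pairs : ((Finset.univ : Finset (Fin n × Fin n)).filter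
    (fun p => p.1 < p.2)).card = n.choose 2 := by
  rw [Finset.card_filter]
  rw [Fintype.sum_prod_type_right]
  have h1 : ∀ k : Fin n, (∑ i : Fin n, if i < k then 1 else 0) = (k : ℕ) := by
    intro k
    rw [← Finset.card_filter]
    have : (Finset.univ.filter (fun i : Fin n => i < k)) = Finset.Iio k := by
      ext i; simp
    rw [this, Fin.card_Iio]
  simp_rw [h1]
  rw [Fin.sum_univ_eq_sum_range (fun i => i) n, Finset.sum_range_id, Nat.choose_two_right]

lemma shelfInv_real (w : Fin n → Fin (2*m)) :
    (shelfInv m n w : ℝ) =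
      ∑ p ∈ (Finset.univ : Finset (Fin n × Fin n)).filter (fun p => p.1 < p.2),
        ((if w p.2 < w p.1 then (1:ℝ) else 0)
          + (if w p.1 = w p.2 ∧ Even (Xval w p.1) then 1 else 0)) := by
  rw [shelfInv_eq]
  have : ((Finset.univ : Finset (Fin n × Fin n)).filter
      (fun p => p.1 < p.2 ∧ (w p.2 < w p.1 ∨ (w p.1 = w p.2 ∧ Even (Xval w p.1)))))
      = ((Finset.univ : Finset (Fin n × Fin n)).filter (fun p => p.1 < p.2)).filter
        (fun p => w p.2 < w p.1 ∨ (w p.1 = w p.2 ∧ Even (Xval w p.1))) := by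
    rw [Finset.filter_filter]
  rw [this, Finset.card_filter]
  push_cast
  apply Finset.sum_congr rfl
  intro p _
  by_cases h1 : w p.2 < w p.1
  · have h2 : ¬ (w p.1 = w p.2 ∧ Even (Xval w p.1)) := by
      rintro ⟨he, -⟩; exact absurd h1 (by rw [he]; exact lt_irrefl _)
    simp [h1, h2]
  · by_cases h2 : w p.1 = w p.2 ∧ Even (Xval w p.1) <;> simp [h1, h2]

lemma hker_comm (z1 z2 : Fin (2*m) × ℝ) : hker m z1 z2 = hker m z2 z1 := by
  have he : (z1.1 = z2.1 ∧ Even ((z1.1 : ℕ) + 1)) ↔ (z2.1 = z1.1 ∧ Even ((z2.1 : ℕ) + 1)) := by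
    constructor <;> rintro ⟨h, hev⟩ <;> exact ⟨h.symm, by rwa [h] at hev⟩
  unfold hker
  rw [if_congr he rfl rfl]
  ring

lemma sum_hker_eq (w : Fin n → Fin (2*m)) (u : Fin n → ℝ) (hu : Function.Injective u) :
    ∑ p ∈ (Finset.univ : Finset (Fin n × Fin n)).filter (fun p => p.1 < p.2),
      hker m (w p.1, u p.1) (w p.2, u p.2)
    = (shelfInv m n (w ∘ Tuple.sort u) : ℝ) - (n.choose 2 : ℝ)/2 := by
  classical
  set σ := Tuple.sort u with hσ
  have hmono : StrictMono (u ∘ σ) :=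
    (Tuple.monotone_sort u).strictMono_of_injective (hu.comp σ.injective)
  -- step 1 : reindex
  have step1 :
      ∑ p ∈ (Finset.univ : Finset (Fin n × Fin n)).filter (fun p => p.1 < p.2),
        hker m (w (σ p.1), u (σ p.1)) (w (σ p.2), u (σ p.2))
      = ∑ p ∈ (Finset.univ : Finset (Fin n × Fin n)).filter (fun p => p.1 < p.2),
        hker m (w p.1, u p.1) (w p.2, u p.2) := by
    apply Finset.sum_bij' (fun p _ => if σ p.1 < σ p.2 then (σ p.1, σ p.2) else (σ p.2, σ p.1))
      (fun q _ => if σ⁻¹ q.1 < σ⁻¹ q.2 then (σ⁻¹ q.1, σ⁻¹ q.2) else (σ⁻¹ q.2, σ⁻¹ q.1))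
    · intro p hp
      simp only [Finset.mem_filter, Finset.mem_univ, true_and] at hp ⊢
      by_cases h : σ p.1 < σ p.2
      · simp [h]
      · have hne : σ p.1 ≠ σ p.2 := fun e => absurd (σ.injective e) (ne_of_lt hp)
        have : σ p.2 < σ p.1 := lt_of_le_of_ne (not_lt.mp h) (fun e => hne e.symm)
        simp [h, this]
    · intro q hq
      simp only [Finset.mem_filter, Finset.mem_univ, true_and] at hq ⊢
      by_cases h : σ⁻¹ q.1 < σ⁻¹ q.2
      · simp [Equiv.Perm.inv_def] at h; simp [h]
      · have hne : σ⁻¹ q.1 ≠ σ⁻¹ q.2 := fun e => absurd (σ⁻¹.injective e) (ne_of_lt hq)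
        have : σ⁻¹ q.2 < σ⁻¹ q.1 := lt_of_le_of_ne (not_lt.mp h) (fun e => hne e.symm)
        simp only [Equiv.Perm.inv_def] at h this; simp [h, this]
    · intro p hp
      simp only [Finset.mem_filter, Finset.mem_univ, true_and] at hp
      by_cases h : σ p.1 < σ p.2 <;> simp [h, hp, Equiv.Perm.inv_def, not_lt_of_gt hp,
        not_lt.mpr (le_of_lt hp)]
    · intro q hq
      simp only [Finset.mem_filter, Finset.mem_univ, true_and] at hq
      by_cases h : σ⁻¹ q.1 < σ⁻¹ q.2 <;> simp only [Equiv.Perm.inv_def] at h <;> simp [h, hq, Equiv.Perm.inv_def,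
        not_lt.mpr (le_of_lt hq)]
    · intro p hp
      by_cases h : σ p.1 < σ p.2
      · simp [h]
      · simp only [h, if_false]
        exact hker_comm _ _
  -- step 2 : evaluate on sorted u
  rw [← step1]
  have step2 : ∀ p ∈ (Finset.univ : Finset (Fin n × Fin n)).filter (fun p => p.1 < p.2),
      hker m (w (σ p.1), u (σ p.1)) (w (σ p.2), u (σ p.2))
      = ((if (w ∘ σ) p.2 < (w ∘ σ) p.1 then (1:ℝ) else 0)
          + (if (w ∘ σ) p.1 = (w ∘ σ) p.2 ∧ Even (Xval (w ∘ σ) p.1) then 1 else 0)) - 1/2 := by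
    intro p hp
    simp only [Finset.mem_filter, Finset.mem_univ, true_and] at hp
    have hu12 : u (σ p.1) < u (σ p.2) := hmono hp
    unfold hker
    simp only [Function.comp_apply, Xval]
    rw [if_pos hu12, if_neg (not_lt.mpr (le_of_lt hu12))]
    simp only [Fin.lt_def]
    by_cases h1 : (w (σ p.2) : ℕ) < (w (σ p.1) : ℕ)
    · rw [if_pos h1]
      ring
    · rw [if_neg h1]
      ring
  rw [Finset.sum_congr rfl step2]
  rw [Finset.sum_sub_distrib]
  rw [← shelfInv_real (w ∘ σ)]
  rw [Finset.sum_const, card_filter_lt_pairs]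
  push_cast
  ring

end Aux

section MeasureAux

instance piMSC {ι : Type*} [Countable ι] {α : ι → Type*} [∀ i, MeasurableSpace (α i)]
    [∀ i, MeasurableSingletonClass (α i)] : MeasurableSingletonClass (∀ i, α i) := by
  refine ⟨fun f => ?_⟩
  have : ({f} : Set (∀ i, α i)) = ⋂ i, (fun g => g i) ⁻¹' {f i} := by
    ext g; simp [funext_iff, eq_comm]
  rw [this]
  exact MeasurableSet.iInter fun i => measurable_pi_apply i (measurableSet_singleton _)

instance : IsProbabilityMeasure unif01 := by
  refine ⟨?_⟩
  rw [show unif01 = (volume : Measure ℝ).restrict (Set.Ioo 0 1) from rfl, Measure.restrict_apply MeasurableSet.univ, Set.univ_inter, Real.volume_Ioo]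
  norm_num

instance : NullSingletonClass unif01 := by unfold unif01; infer_instance

lemma uniformM_prob (α : Type*) [Fintype α] [MeasurableSpace α] [Nonempty α] :
    IsProbabilityMeasure (uniformM α) := by
  refine ⟨?_⟩
  unfold uniformM
  rw [Measure.smul_apply, Measure.count_univ, ENat.card_eq_coe_fintype_card, smul_eq_mul]
  exact ENNReal.inv_mul_cancel (by exact_mod_cast (Fintype.card_ne_zero (α := α))) (ENNReal.natCast_ne_top _)

lemma map_precomp {n m : ℕ} (σ : Equiv.Perm (Fin n)) :
    Measure.map (fun w : Fin n → Fin (2*m) => w ∘ σ) (uniformM (Fin n → Fin (2*m)))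
      = uniformM (Fin n → Fin (2*m)) := by
  have hmeas : Measurable (fun w : Fin n → Fin (2*m) => w ∘ σ) := measurable_of_countable _
  rw [Measure.ext_iff_singleton]
  intro x
  rw [Measure.map_apply hmeas (measurableSet_singleton x)]
  have hpre : (fun w : Fin n → Fin (2*m) => w ∘ σ) ⁻¹' {x} = {x ∘ σ.symm} := by
    ext w
    simp only [Set.mem_preimage, Set.mem_singleton_iff]
    constructor
    · intro h
      funext i
      have := congrFun h (σ.symm i)
      simpa using this
    · intro h
      subst h
      funext i
      simp
  rw [hpre]
  unfold uniformM
  rw [Measure.smul_apply, Measure.smul_apply, Measure.count_singleton, Measure.count_singleton]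

lemma ae_inj (n : ℕ) :
    ∀ᵐ u ∂(Measure.pi fun _ : Fin n => unif01), Function.Injective u := by
  classical
  have hpair : ∀ i k : Fin n, i ≠ k →
      (Measure.pi fun _ : Fin n => unif01) {u | u i = u k} = 0 := by
    intro i k hik
    have hmp := measurePreserving_piEquivPiSubtypeProd (fun _ : Fin n => unif01)
      (fun j => j = i)
    set T : Set (({j : Fin n // j = i} → ℝ) × ({j : Fin n // ¬ j = i} → ℝ)) :=
      {q | q.1 ⟨i, rfl⟩ = q.2 ⟨k, fun h => hik h.symm⟩} with hTdef
    have hT : MeasurableSet T := by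
      apply measurableSet_eq_fun
      · exact (measurable_pi_apply _).comp measurable_fst
      · exact (measurable_pi_apply _).comp measurable_snd
    have hpre : {u : Fin n → ℝ | u i = u k}
        = (MeasurableEquiv.piEquivPiSubtypeProd (fun _ : Fin n => ℝ) (fun j => j = i)) ⁻¹' T :=
      rfl
    rw [hpre, hmp.measure_preimage hT.nullMeasurableSet, Measure.prod_apply hT]
    have hnull : ∀ a : {j : Fin n // j = i} → ℝ,
        (Measure.pi fun _ : {j : Fin n // ¬ j = i} => unif01) (Prod.mk a ⁻¹' T) = 0 := by
      intro a
      have : Prod.mk a ⁻¹' T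
          = {b : {j : Fin n // ¬ j = i} → ℝ | b ⟨k, fun h => hik h.symm⟩ = a ⟨i, rfl⟩} := by
        ext b; simp [hTdef, eq_comm]
      rw [this]
      exact Measure.pi_hyperplane _ _ _
    simp [hnull]
  rw [ae_iff]
  have hsub : {u : Fin n → ℝ | ¬ Function.Injective u}
      ⊆ ⋃ i, ⋃ k, ⋃ (_ : i ≠ k), {u : Fin n → ℝ | u i = u k} := by
    intro u hu
    simp only [Set.mem_setOf_eq, Function.Injective, not_forall] at hu
    obtain ⟨i, k, h1, h2⟩ := hu
    exact Set.mem_iUnion.2 ⟨i, Set.mem_iUnion.2 ⟨k, Set.mem_iUnion.2 ⟨h2, h1⟩⟩⟩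
  exact measure_mono_null hsub (measure_iUnion_null fun i => measure_iUnion_null fun k =>
    measure_iUnion_null fun h => hpair i k h)

end MeasureAux

lemma measurable_hker_term {n m : ℕ} (p : Fin n × Fin n) :
    Measurable (fun z : (Fin n → Fin (2*m)) × (Fin n → ℝ) =>
      hker m (z.1 p.1, z.2 p.1) (z.1 p.2, z.2 p.2)) := by
  unfold hker
  simp only
  have h1 : Measurable (fun z : (Fin n → Fin (2*m)) × (Fin n → ℝ) =>
      (if ((z.1 p.2 : ℕ) < (z.1 p.1 : ℕ)) then (1:ℝ) else 0)) :=
    (measurable_of_countable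
      (fun w : Fin n → Fin (2*m) => if ((w p.2 : ℕ) < (w p.1 : ℕ)) then (1:ℝ) else 0)).comp
      measurable_fst
  have h2 : Measurable (fun z : (Fin n → Fin (2*m)) × (Fin n → ℝ) =>
      (if z.2 p.1 < z.2 p.2 then (1:ℝ) else 0)) :=
    Measurable.ite (measurableSet_lt (measurable_snd.eval) (measurable_snd.eval))
      measurable_const measurable_const
  have h3 : Measurable (fun z : (Fin n → Fin (2*m)) × (Fin n → ℝ) =>
      (if ((z.1 p.1 : ℕ) < (z.1 p.2 : ℕ)) then (1:ℝ) else 0)) :=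
    (measurable_of_countable
      (fun w : Fin n → Fin (2*m) => if ((w p.1 : ℕ) < (w p.2 : ℕ)) then (1:ℝ) else 0)).comp
      measurable_fst
  have h4 : Measurable (fun z : (Fin n → Fin (2*m)) × (Fin n → ℝ) =>
      (if z.2 p.2 < z.2 p.1 then (1:ℝ) else 0)) :=
    Measurable.ite (measurableSet_lt (measurable_snd.eval) (measurable_snd.eval))
      measurable_const measurable_const
  have h5 : Measurable (fun z : (Fin n → Fin (2*m)) × (Fin n → ℝ) =>
      (if z.1 p.1 = z.1 p.2 ∧ Even ((z.1 p.1 : ℕ) + 1) then (1:ℝ) else 0)) :=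
    (measurable_of_countable
      (fun w : Fin n → Fin (2*m) => if w p.1 = w p.2 ∧ Even ((w p.1 : ℕ) + 1) then (1:ℝ)
        else 0)).comp measurable_fst
  exact (((h1.mul h2).add (h3.mul h4)).add h5).sub measurable_const


/-- For `n ≥ 2`, `m ≥ 1`:
`W_{n,m} := (1/C(n,2))·(I_{n,m} − C(n,2)/2)` is equal in distribution to the order-2
U-statistic `(1/C(n,2)) Σ_{1≤i<k≤n} h(Z_i, Z_k)`, where `Z_i = (X_i, U_i)` with
`X_1,…,X_n` i.i.d. uniform on `{1,…,2m}` and `U_1,…,U_n` i.i.d. uniform on `(0,1)`,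
independent of the `X`'s. -/
theorem W_eq_d_U_statistic (n m : ℕ) (hn : 2 ≤ n) (hm : 1 ≤ m) :
    Measure.map (fun w : Fin n → Fin (2*m) =>
        (1 / (n.choose 2 : ℝ)) * ((shelfInv m n w : ℝ) - (n.choose 2 : ℝ) / 2))
      (uniformM (Fin n → Fin (2*m))) =
    Measure.map (fun z : (Fin n → Fin (2*m)) × (Fin n → ℝ) =>
        (1 / (n.choose 2 : ℝ)) *
          ∑ p ∈ (Finset.univ : Finset (Fin n × Fin n)).filter (fun p => p.1 < p.2),
            hker m (z.1 p.1, z.2 p.1) (z.1 p.2, z.2 p.2))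
      ((uniformM (Fin n → Fin (2*m))).prod (Measure.pi fun _ : Fin n => unif01)) := by
  classical
  haveI : Nonempty (Fin (2*m)) := ⟨⟨0, by omega⟩⟩
  haveI hup : IsProbabilityMeasure (uniformM (Fin n → Fin (2*m))) := uniformM_prob _
  set μ := uniformM (Fin n → Fin (2*m)) with hμ
  set ν := Measure.pi fun _ : Fin n => unif01 with hν
  haveI : IsProbabilityMeasure ν := by rw [hν]; infer_instance
  set g : (Fin n → Fin (2*m)) → ℝ := fun w =>
    (1 / (n.choose 2 : ℝ)) * ((shelfInv m n w : ℝ) - (n.choose 2 : ℝ) / 2) with hg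
  have hgm : Measurable g := measurable_of_countable _
  set F : (Fin n → Fin (2*m)) × (Fin n → ℝ) → ℝ := fun z =>
    (1 / (n.choose 2 : ℝ)) *
      ∑ p ∈ (Finset.univ : Finset (Fin n × Fin n)).filter (fun p => p.1 < p.2),
        hker m (z.1 p.1, z.2 p.1) (z.1 p.2, z.2 p.2) with hF
  have hFm : Measurable F :=
    (Finset.measurable_sum _ fun p _ => measurable_hker_term p).const_mul _
  ext s hs
  rw [Measure.map_apply hgm hs, Measure.map_apply hFm hs, Measure.prod_apply_symm (hFm hs)]
  have hae : ∀ᵐ u ∂ν, μ ((fun w : Fin n → Fin (2*m) => (w, u)) ⁻¹' (F ⁻¹' s)) = μ (g ⁻¹' s) := by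
    filter_upwards [ae_inj n] with u hu
    have hset : (fun w : Fin n → Fin (2*m) => (w, u)) ⁻¹' (F ⁻¹' s)
        = (fun w : Fin n → Fin (2*m) => w ∘ Tuple.sort u) ⁻¹' (g ⁻¹' s) := by
      ext w
      simp only [Set.mem_preimage]
      have hFg : F (w, u) = g (w ∘ Tuple.sort u) := by
        simp only [hF, hg]
        rw [sum_hker_eq w u hu]
      rw [hFg]
    rw [hset, ← Measure.map_apply (measurable_of_countable _) (hgm hs), hμ, map_precomp]
  rw [lintegral_congr_ae hae, lintegral_const, measure_univ, mul_one]
end
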